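/- arXiv:1302.2437 — 2 statements merged into one kernel-verified Lean document; each statement's English description precedes it below -/
import Mathlib

section
/- Let K be a field, l > 1 an integer, n ≥ 1 an integer, and let q₁, …, qₙ be pairwise distinct elements of K satisfying q_j^l = 1 and q_j ≠ 1 for every j. Then Σ_{d=0}^{l−1} S_{d,n}(q₁, …, qₙ) = 0. -/
/-- The complete homogeneous symmetric polynomial `S_{d,n}(x₁,…,xₙ)`:
the sum over all weakly increasing `d`-tuples of indices, equivalently the sum over all
exponent vectors `(k₁,…,kₙ)` with `k₁ + ⋯ + kₙ = d` of `x₁^{k₁}⋯xₙ^{kₙ}` (with `S_{0,n} = 1`). -/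
noncomputable def completeHomogeneous {K : Type*} [CommRing K] (d n : ℕ) (x : Fin n → K) : K :=
  ∑ f ∈ Finset.Nat.antidiagonalTuple n d, ∏ i, x i ^ f i

section Aux

variable {K : Type*} [CommRing K]

lemma ch_zero (n : ℕ) (x : Fin n → K) : completeHomogeneous 0 n x = 1 := by
  simp [completeHomogeneous, Finset.Nat.antidiagonalTuple_zero_right]

lemma ch_one_var (d : ℕ) (x : Fin 1 → K) : completeHomogeneous d 1 x = x 0 ^ d := by
  simp [completeHomogeneous]

/-- Splitting off the first variable. -/
lemma ch_cons (d n : ℕ) (a : K) (x : Fin n → K) :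
    completeHomogeneous d (n + 1) (Fin.cons a x) =
      ∑ p ∈ Finset.HasAntidiagonal.antidiagonal d, a ^ p.1 * completeHomogeneous p.2 n x := by
  unfold completeHomogeneous
  simp_rw [Finset.mul_sum]
  rw [Finset.sum_sigma']
  refine (Finset.sum_nbij'
    (fun q => Fin.cons q.1.1 q.2)
    (fun (f : Fin (n + 1) → ℕ) => (⟨(f 0, ∑ i : Fin n, f i.succ), Fin.tail f⟩ :
      (_ : ℕ × ℕ) × (Fin n → ℕ)))
    ?_ ?_ ?_ ?_ ?_).symm
  · rintro ⟨⟨k, e⟩, g⟩ hq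
    simp only [Finset.mem_sigma, Finset.HasAntidiagonal.mem_antidiagonal,
      Finset.Nat.mem_antidiagonalTuple] at hq
    rw [Finset.Nat.mem_antidiagonalTuple, Fin.sum_cons, hq.2, hq.1]
  · intro f hf
    rw [Finset.Nat.mem_antidiagonalTuple] at hf
    simp only [Finset.mem_sigma, Finset.HasAntidiagonal.mem_antidiagonal,
      Finset.Nat.mem_antidiagonalTuple]
    constructor
    · rw [← hf, Fin.sum_univ_succ]
    · rfl
  · rintro ⟨⟨k, e⟩, g⟩ hq
    simp only [Finset.mem_sigma, Finset.HasAntidiagonal.mem_antidiagonal,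
      Finset.Nat.mem_antidiagonalTuple] at hq
    simp [Fin.tail_cons, hq.2]
  · intro f _
    simp [Fin.cons_self_tail]
  · rintro ⟨⟨k, e⟩, g⟩ _
    rw [Fin.prod_univ_succ]
    simp [Fin.cons_zero, Fin.cons_succ]

lemma ch_cons_range (d n : ℕ) (a : K) (x : Fin n → K) :
    completeHomogeneous d (n + 1) (Fin.cons a x) =
      ∑ k ∈ Finset.range (d + 1), a ^ k * completeHomogeneous (d - k) n x := by
  rw [ch_cons, Finset.Nat.sum_antidiagonal_eq_sum_range_succ_mk]

/-- Recursion: `h_{d+1}(a,x) = h_{d+1}(x) + a·h_d(a,x)`. -/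
lemma ch_rec (d n : ℕ) (a : K) (x : Fin n → K) :
    completeHomogeneous (d + 1) (n + 1) (Fin.cons a x) =
      completeHomogeneous (d + 1) n x
        + a * completeHomogeneous d (n + 1) (Fin.cons a x) := by
  rw [ch_cons_range, ch_cons_range, Finset.sum_range_succ', Finset.mul_sum]
  simp only [pow_zero, one_mul, Nat.sub_zero, pow_succ, Nat.succ_sub_succ]
  rw [add_comm]
  congr 1
  apply Finset.sum_congr rfl
  intro k _
  ring

/-- The swap identity: `h_{d+1}(u,x) - h_{d+1}(v,x) = (u-v)·h_d(u,v,x)`. -/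
lemma ch_swap (d : ℕ) : ∀ (n : ℕ) (x : Fin n → K) (u v : K),
    completeHomogeneous (d + 1) (n + 1) (Fin.cons u x)
      - completeHomogeneous (d + 1) (n + 1) (Fin.cons v x)
    = (u - v) * completeHomogeneous d (n + 2) (Fin.cons u (Fin.cons v x)) := by
  induction d with
  | zero =>
    intro n x u v
    rw [ch_rec 0 n u x, ch_rec 0 n v x, ch_zero, ch_zero, ch_zero]
    ring
  | succ d ih =>
    intro n x u v
    rw [ch_rec (d + 1) n u x, ch_rec (d + 1) n v x]
    have h1 := ih n x u v
    have h2 := ch_rec d (n + 1) u (Fin.cons v x)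
    rw [h2]
    linear_combination u * h1

end Aux

section FieldPart

variable {K : Type*} [Field K]

/-- `h_d` of `m+2` distinct `l`-th roots of unity vanishes for `l-(m+1) ≤ d ≤ l-1`. -/
lemma ch_roots_zero (l : ℕ) (hl : 1 < l) : ∀ m : ℕ, ∀ y : Fin (m + 2) → K,
    Function.Injective y → (∀ j, y j ^ l = 1) → ∀ d : ℕ, l ≤ d + m + 1 → d < l →
    completeHomogeneous d (m + 2) y = 0 := by
  intro m
  induction m with
  | zero =>
    intro y hy hroot d hd1 hd2
    have hdl : d + 1 = l := by omega
    have hy0 : y = Fin.cons (y 0) (Fin.cons (y 1) (Fin.tail (Fin.tail y))) := by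
      funext i
      refine Fin.cases ?_ (fun j => ?_) i
      · simp
      · refine Fin.cases ?_ (fun j' => ?_) j <;> simp [Fin.tail]
    have key := ch_swap d 0 (Fin.tail (Fin.tail y)) (y 0) (y 1)
    rw [ch_one_var, ch_one_var, Fin.cons_zero, Fin.cons_zero, hdl, hroot, hroot, sub_self]
      at key
    have hne : y 0 - y 1 ≠ 0 := by
      rw [sub_ne_zero]
      exact fun h => absurd (hy h) (by decide)
    rw [hy0]
    rcases mul_eq_zero.mp key.symm with h | h
    · exact absurd h hne
    · exact h
  | succ m ih =>
    intro y hy hroot d hd1 hd2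
    have hy0 : y = Fin.cons (y 0) (Fin.tail y) := (Fin.cons_self_tail y).symm
    have htail : Fin.tail y = Fin.cons (y 1) (Fin.tail (Fin.tail y)) := by
      funext j
      refine Fin.cases ?_ (fun j' => ?_) j <;> simp [Fin.tail]
    set t := Fin.tail (Fin.tail y) with ht
    have htinj : Function.Injective t :=
      (hy.comp (Fin.succ_injective _)).comp (Fin.succ_injective _)
    have htroot : ∀ j, t j ^ l = 1 := fun j => hroot _
    have h01 : y 0 ≠ y 1 := by
      intro h
      have h2 := congrArg Fin.val (hy h)
      simp only [Fin.val_zero, Fin.val_one] at h2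
      omega
    have h0inj : Function.Injective (Fin.cons (y 0) t) := by
      rw [Fin.cons_injective_iff]
      refine ⟨fun ⟨j, hj⟩ => ?_, htinj⟩
      exact Fin.succ_ne_zero _ (hy hj)
    have h1inj : Function.Injective (Fin.cons (y 1) t) := by
      rw [Fin.cons_injective_iff]
      refine ⟨fun ⟨j, hj⟩ => ?_, htinj⟩
      have h2 := congrArg Fin.val (hy hj)
      simp only [Fin.val_succ, Fin.val_one] at h2
      omega
    have h0root : ∀ j : Fin (m + 2), (Fin.cons (y 0) t : Fin (m + 2) → K) j ^ l = 1 := by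
      intro j
      cases j using Fin.cases with
      | zero => simpa using hroot 0
      | succ j' => simpa using htroot j'
    have h1root : ∀ j : Fin (m + 2), (Fin.cons (y 1) t : Fin (m + 2) → K) j ^ l = 1 := by
      intro j
      cases j using Fin.cases with
      | zero => simpa using hroot 1
      | succ j' => simpa using htroot j'
    have sub : ∀ d' : ℕ, l ≤ d' + m + 2 → d' + 1 < l →
        completeHomogeneous d' (m + 3) y = 0 := by
      intro d' hda hdb
      have key := ch_swap d' (m + 1) t (y 0) (y 1)
      have z0 : completeHomogeneous (d' + 1) (m + 2) (Fin.cons (y 0) t) = 0 :=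
        ih _ h0inj h0root (d' + 1) (by omega) (by omega)
      have z1 : completeHomogeneous (d' + 1) (m + 2) (Fin.cons (y 1) t) = 0 :=
        ih _ h1inj h1root (d' + 1) (by omega) (by omega)
      rw [z0, z1, sub_self] at key
      have hne : y 0 - y 1 ≠ 0 := sub_ne_zero.mpr h01
      have hz : completeHomogeneous d' (m + 3) (Fin.cons (y 0) (Fin.cons (y 1) t)) = 0 := by
        rcases mul_eq_zero.mp key.symm with h | h
        · exact absurd h hne
        · exact h
      rwa [← htail, ← hy0] at hz
    by_cases hcase : d + 1 < l
    · exact sub d (by omega) hcase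
    · have hd : d + 1 = l := by omega
      obtain ⟨e, he⟩ : ∃ e, d = e + 1 := ⟨d - 1, by omega⟩
      have ztail : completeHomogeneous (e + 1) (m + 2) (Fin.tail y) = 0 := by
        have htlinj : Function.Injective (Fin.tail y) := hy.comp (Fin.succ_injective _)
        exact ih _ htlinj (fun j => hroot _) (e + 1) (by omega) (by omega)
      have zmid : completeHomogeneous e (m + 3) y = 0 := sub e (by omega) (by omega)
      have hrec := ch_rec e (m + 2) (y 0) (Fin.tail y)
      rw [Fin.cons_self_tail] at hrec
      rw [he, hrec, ztail, zmid]
      ring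

end FieldPart

theorem stmt1 (K : Type*) [Field K] (l n : ℕ) (hl : 1 < l) (hn : 1 ≤ n)
    (x : Fin n → K) (hdist : Function.Injective x)
    (hroot : ∀ j, x j ^ l = 1) (hne1 : ∀ j, x j ≠ 1) :
    ∑ d ∈ Finset.range l, completeHomogeneous d n x = 0 := by
  obtain ⟨m, rfl⟩ : ∃ m, n = m + 1 := ⟨n - 1, by omega⟩
  have key : completeHomogeneous (l - 1) (m + 2) (Fin.cons 1 x)
      = ∑ d ∈ Finset.range l, completeHomogeneous d (m + 1) x := by
    rw [ch_cons_range]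
    have hll : l - 1 + 1 = l := by omega
    rw [hll]
    rw [← Finset.sum_range_reflect (fun d => completeHomogeneous d (m + 1) x) l]
    apply Finset.sum_congr rfl
    intro k _
    rw [one_pow, one_mul]
  rw [← key]
  refine ch_roots_zero l hl m (Fin.cons 1 x) ?_ ?_ (l - 1) (by omega) (by omega)
  · rw [Fin.cons_injective_iff]
    exact ⟨fun ⟨j, hj⟩ => hne1 j hj, hdist⟩
  · intro j
    cases j using Fin.cases with
    | zero => simpa using one_pow l
    | succ j' => simpa using hroot j'
end

section
/- Let K be a field, l > 1 an integer, q ∈ K an element such that q² is a primitive l-th root of unity, and let n be an integer with 1 ≤ n ≤ l−1. Then Σ_{i=0}^{l−1} S_{i,n}(1, q², q⁴, …, q^{2(n−1)}) = l · (∏_{j=1}^{n−1}(1 − q^{2j}))^{−1}, where the empty product (case n = 1) is 1 and each factor 1 − q^{2j} is nonzero since q² is a primitive l-th root of unity and 1 ≤ j ≤ n−1 < l. -/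
open Finset

lemma sum_aT_cons {M : Type*} [AddCommMonoid M] (n d : ℕ) (g : (Fin (n+1) → ℕ) → M) :
    ∑ f ∈ Finset.Nat.antidiagonalTuple (n+1) d, g f =
      ∑ p ∈ Finset.HasAntidiagonal.antidiagonal d, ∑ f ∈ Finset.Nat.antidiagonalTuple n p.2,
        g (Fin.cons p.1 f) := by
  rw [Finset.sum_sigma']
  refine Finset.sum_nbij' (fun (f : Fin (n+1) → ℕ) => (⟨(f 0, ∑ i : Fin n, f i.succ), Fin.tail f⟩ : (_ : ℕ × ℕ) × (Fin n → ℕ)))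
    (fun pf => Fin.cons pf.1.1 pf.2) ?_ ?_ ?_ ?_ ?_
  · intro f hf
    simp only [Finset.Nat.mem_antidiagonalTuple, Fin.sum_univ_succ] at hf
    simp [Finset.mem_sigma, Finset.mem_antidiagonal, Finset.Nat.mem_antidiagonalTuple, hf,
      Fin.tail]
  · intro pf hpf
    simp only [Finset.mem_sigma, Finset.HasAntidiagonal.mem_antidiagonal,
      Finset.Nat.mem_antidiagonalTuple] at hpf
    simp [Finset.Nat.mem_antidiagonalTuple, Fin.sum_univ_succ, hpf.2, hpf.1]
  · intro f hf; exact Fin.cons_self_tail f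
  · intro pf hpf
    simp only [Finset.mem_sigma, Finset.mem_antidiagonal,
      Finset.Nat.mem_antidiagonalTuple] at hpf
    ext1
    · simp [hpf.2]
    · simp [Fin.tail]
  · intro f hf; exact congrArg g (Fin.cons_self_tail f).symm

lemma sum_aT_snoc {M : Type*} [AddCommMonoid M] (n d : ℕ) (g : (Fin (n+1) → ℕ) → M) :
    ∑ f ∈ Finset.Nat.antidiagonalTuple (n+1) d, g f =
      ∑ p ∈ Finset.HasAntidiagonal.antidiagonal d, ∑ f ∈ Finset.Nat.antidiagonalTuple n p.1,
        g (Fin.snoc f p.2) := by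
  rw [Finset.sum_sigma']
  refine Finset.sum_nbij' (fun (f : Fin (n+1) → ℕ) => (⟨(∑ i : Fin n, f i.castSucc, f (Fin.last n)), Fin.init f⟩ : (_ : ℕ × ℕ) × (Fin n → ℕ)))
    (fun pf => Fin.snoc pf.2 pf.1.2) ?_ ?_ ?_ ?_ ?_
  · intro f hf
    simp only [Finset.Nat.mem_antidiagonalTuple, Fin.sum_univ_castSucc] at hf
    simp [Finset.mem_sigma, Finset.mem_antidiagonal, Finset.Nat.mem_antidiagonalTuple, hf,
      Fin.init]
  · intro pf hpf
    simp only [Finset.mem_sigma, Finset.HasAntidiagonal.mem_antidiagonal,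
      Finset.Nat.mem_antidiagonalTuple] at hpf
    simp [Finset.Nat.mem_antidiagonalTuple, Fin.sum_univ_castSucc, hpf.2, hpf.1]
  · intro f hf; exact Fin.snoc_init_self f
  · intro pf hpf
    simp only [Finset.mem_sigma, Finset.mem_antidiagonal,
      Finset.Nat.mem_antidiagonalTuple] at hpf
    ext1
    · simp [hpf.2]
    · simp [Fin.init]
  · intro f hf; exact congrArg g (Fin.snoc_init_self f).symm

lemma CH_cons {K : Type*} [CommRing K] (d n : ℕ) (x : Fin (n+1) → K) :
    completeHomogeneous d (n+1) x =
      ∑ p ∈ Finset.HasAntidiagonal.antidiagonal d,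
        x 0 ^ p.1 * completeHomogeneous p.2 n (fun i => x i.succ) := by
  rw [completeHomogeneous, sum_aT_cons]
  refine Finset.sum_congr rfl fun p hp => ?_
  rw [completeHomogeneous, Finset.mul_sum]
  refine Finset.sum_congr rfl fun f hf => ?_
  rw [Fin.prod_univ_succ]
  simp

lemma CH_snoc {K : Type*} [CommRing K] (d n : ℕ) (x : Fin (n+1) → K) :
    completeHomogeneous d (n+1) x =
      ∑ p ∈ Finset.HasAntidiagonal.antidiagonal d,
        completeHomogeneous p.1 n (fun i => x i.castSucc) * x (Fin.last n) ^ p.2 := by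
  rw [completeHomogeneous, sum_aT_snoc]
  refine Finset.sum_congr rfl fun p hp => ?_
  rw [completeHomogeneous, Finset.sum_mul]
  refine Finset.sum_congr rfl fun f hf => ?_
  rw [Fin.prod_univ_castSucc]
  simp

lemma CH_zero {K : Type*} [CommRing K] (n : ℕ) (x : Fin n → K) :
    completeHomogeneous 0 n x = 1 := by
  simp [completeHomogeneous, Finset.Nat.antidiagonalTuple_zero_right]

lemma CH_smul {K : Type*} [CommRing K] (d n : ℕ) (c : K) (x : Fin n → K) :
    completeHomogeneous d n (fun i => c * x i) = c ^ d * completeHomogeneous d n x := by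
  rw [completeHomogeneous, completeHomogeneous, Finset.mul_sum]
  refine Finset.sum_congr rfl fun f hf => ?_
  rw [Finset.Nat.mem_antidiagonalTuple] at hf
  simp_rw [mul_pow, Finset.prod_mul_distrib, Finset.prod_pow_eq_pow_sum, hf]


lemma CH_one {K : Type*} [CommRing K] (d : ℕ) (x : Fin 1 → K) :
    completeHomogeneous d 1 x = x 0 ^ d := by
  rw [completeHomogeneous, Finset.Nat.antidiagonalTuple_one]
  simp

lemma CH_rec1 {K : Type*} [CommRing K] (d m : ℕ) (x : Fin (m+1) → K) :
    completeHomogeneous (d+1) (m+1) x =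
      completeHomogeneous (d+1) m (fun i => x i.succ)
        + x 0 * completeHomogeneous d (m+1) x := by
  rw [CH_cons, Finset.Nat.sum_antidiagonal_succ, CH_cons d m x, Finset.mul_sum]
  simp only [pow_zero, one_mul]
  congr 1
  refine Finset.sum_congr rfl fun p hp => ?_
  rw [pow_succ]; ring

lemma CH_rec2 {K : Type*} [CommRing K] (d m : ℕ) (x : Fin (m+1) → K) :
    completeHomogeneous (d+1) (m+1) x =
      completeHomogeneous (d+1) m (fun i => x i.castSucc)
        + x (Fin.last m) * completeHomogeneous d (m+1) x := by
  rw [CH_snoc, Finset.Nat.sum_antidiagonal_succ', CH_snoc d m x, Finset.mul_sum]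
  simp only [pow_zero, mul_one]
  congr 1
  refine Finset.sum_congr rfl fun p hp => ?_
  rw [pow_succ]; ring

lemma T_rec1 {K : Type*} [CommRing K] (ω : K) (m d : ℕ) :
    completeHomogeneous (d+1) (m+1) (fun j : Fin (m+1) => ω ^ (j : ℕ)) =
      ω ^ (d+1) * completeHomogeneous (d+1) m (fun j : Fin m => ω ^ (j : ℕ))
        + completeHomogeneous d (m+1) (fun j : Fin (m+1) => ω ^ (j : ℕ)) := by
  have h := CH_rec1 d m (fun j : Fin (m+1) => ω ^ (j : ℕ))
  simp only [Fin.val_succ, Fin.val_zero, pow_zero, one_mul] at h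
  rw [h]
  congr 1
  rw [show (fun i : Fin m => ω ^ ((i : ℕ) + 1)) = fun i : Fin m => ω * ω ^ (i : ℕ) from
    funext fun i => by rw [pow_succ]; ring, CH_smul]

lemma T_rec2 {K : Type*} [CommRing K] (ω : K) (m d : ℕ) :
    completeHomogeneous (d+1) (m+1) (fun j : Fin (m+1) => ω ^ (j : ℕ)) =
      completeHomogeneous (d+1) m (fun j : Fin m => ω ^ (j : ℕ))
        + ω ^ m * completeHomogeneous d (m+1) (fun j : Fin (m+1) => ω ^ (j : ℕ)) := by
  have h := CH_rec2 d m (fun j : Fin (m+1) => ω ^ (j : ℕ))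
  simp only [Fin.coe_castSucc, Fin.val_last] at h
  exact h

lemma T_zero {K : Type*} [Field K] (ω : K) (m d : ℕ) (h1 : ω ^ (d+1) = 1)
    (hm : ω ^ m ≠ 1) :
    completeHomogeneous d (m+1) (fun j : Fin (m+1) => ω ^ (j : ℕ)) = 0 := by
  have e1 := T_rec1 ω m d
  have e2 := T_rec2 ω m d
  rw [h1, one_mul] at e1
  have e3 := e1.symm.trans e2
  have e4 : (1 - ω ^ m) * completeHomogeneous d (m+1) (fun j : Fin (m+1) => ω ^ (j : ℕ)) = 0 := by
    linear_combination e3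
  rcases mul_eq_zero.mp e4 with h | h
  · exact absurd (by linear_combination -h) hm
  · exact h

theorem stmt2 (K : Type*) [Field K] (l n : ℕ) (hl : 1 < l) (q : K)
    (hq : IsPrimitiveRoot (q ^ 2) l) (hn1 : 1 ≤ n) (hnl : n ≤ l - 1) :
    ∑ i ∈ Finset.range l,
        completeHomogeneous i n (fun j : Fin n => q ^ (2 * (j : ℕ))) =
      (l : K) * (∏ j ∈ Finset.Icc 1 (n - 1), (1 - q ^ (2 * j)))⁻¹ := by
  simp_rw [pow_mul]
  set ω : K := q ^ 2 with hω
  have hωl : ω ^ l = 1 := hq.pow_eq_one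
  have hne : ∀ m : ℕ, 1 ≤ m → m ≤ l - 1 → ω ^ m ≠ 1 := fun m h1 h2 =>
    hq.pow_ne_one_of_pos_of_lt (by omega) (by omega)
  have key : ∀ m : ℕ, 1 ≤ m → m ≤ l - 1 →
      (∑ i ∈ Finset.range l, completeHomogeneous i m (fun j : Fin m => ω ^ (j : ℕ))) *
        ∏ j ∈ Finset.Icc 1 (m-1), (1 - ω ^ j) = (l : K) := by
    intro m hm
    induction m, hm using Nat.le_induction with
    | base =>
      intro _
      simp [CH_one]
    | succ m hm ih =>
      intro hml
      have hml' : m ≤ l - 1 := by omega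
      have ihv := ih hml'
      -- zero lemma
      have hz : completeHomogeneous (l-1) (m+1) (fun j : Fin (m+1) => ω ^ (j : ℕ)) = 0 := by
        refine T_zero ω m (l-1) ?_ (hne m hm hml')
        rw [show l - 1 + 1 = l by omega, hωl]
      -- the sum recursion
      obtain ⟨k, hk⟩ : ∃ k, l = k + 1 := ⟨l - 1, by omega⟩
      subst hk
      have hkz : completeHomogeneous k (m+1) (fun j : Fin (m+1) => ω ^ (j : ℕ)) = 0 := by
        simpa using hz
      have f1 : ∑ i ∈ Finset.range (k+1),
          completeHomogeneous i (m+1) (fun j : Fin (m+1) => ω ^ (j : ℕ)) =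
          (∑ i ∈ Finset.range k, completeHomogeneous (i+1) m (fun j : Fin m => ω ^ (j : ℕ)))
            + 1 + ω ^ m * ∑ i ∈ Finset.range k,
              completeHomogeneous i (m+1) (fun j : Fin (m+1) => ω ^ (j : ℕ)) := by
        rw [Finset.sum_range_succ']
        rw [Finset.sum_congr rfl fun i _ => T_rec2 ω m i]
        rw [Finset.sum_add_distrib, ← Finset.mul_sum, CH_zero]
        ring
      have f2 : ∑ i ∈ Finset.range (k+1),
          completeHomogeneous i (m+1) (fun j : Fin (m+1) => ω ^ (j : ℕ)) =
          ∑ i ∈ Finset.range k,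
            completeHomogeneous i (m+1) (fun j : Fin (m+1) => ω ^ (j : ℕ)) := by
        rw [Finset.sum_range_succ, hkz, add_zero]
      have f3 : ∑ i ∈ Finset.range (k+1),
          completeHomogeneous i m (fun j : Fin m => ω ^ (j : ℕ)) =
          (∑ i ∈ Finset.range k, completeHomogeneous (i+1) m (fun j : Fin m => ω ^ (j : ℕ)))
            + 1 := by
        rw [Finset.sum_range_succ', CH_zero]
      have frec : (∑ i ∈ Finset.range (k+1),
            completeHomogeneous i (m+1) (fun j : Fin (m+1) => ω ^ (j : ℕ))) * (1 - ω ^ m) =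
          ∑ i ∈ Finset.range (k+1),
            completeHomogeneous i m (fun j : Fin m => ω ^ (j : ℕ)) := by
        rw [f3]
        linear_combination f1 - ω ^ m * f2
      -- assemble
      obtain ⟨t, rfl⟩ : ∃ t, m = t + 1 := ⟨m - 1, by omega⟩
      rw [show (t + 1 + 1) - 1 = t + 1 from rfl,
        Finset.prod_Icc_succ_top (by omega : 1 ≤ t + 1)]
      rw [show (t + 1) - 1 = t from rfl] at ihv
      calc (∑ i ∈ Finset.range (k+1),
            completeHomogeneous i (t+1+1) (fun j : Fin (t+1+1) => ω ^ (j : ℕ))) *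
            ((∏ j ∈ Finset.Icc 1 t, (1 - ω ^ j)) * (1 - ω ^ (t+1)))
          = ((∑ i ∈ Finset.range (k+1),
              completeHomogeneous i (t+1+1) (fun j : Fin (t+1+1) => ω ^ (j : ℕ))) *
              (1 - ω ^ (t+1))) * ∏ j ∈ Finset.Icc 1 t, (1 - ω ^ j) := by ring
        _ = (↑(k+1) : K) := by rw [frec]; exact ihv
  have hP : (∏ j ∈ Finset.Icc 1 (n-1), (1 - ω ^ j)) ≠ 0 := by
    refine Finset.prod_ne_zero_iff.mpr fun j hj => ?_
    rw [Finset.mem_Icc] at hj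
    exact sub_ne_zero.mpr (Ne.symm (hne j hj.1 (by omega)))
  rw [eq_mul_inv_iff_mul_eq₀ hP]
  exact key n hn1 hnl
end
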